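/- Let (S_i)_{i=1}^k be a partition of {1,…,d}, let x₀ ∈ ℝ^d have support T with σ = |T|/d, ρ_i = |S_i|/d, α_i = |T ∩ S_i|/|S_i|, let ω ∈ ℝ_+^k have strictly positive entries, set w = Σ_{i=1}^k ω_i 1_{S_i}, and let g be a standard Gaussian random vector in ℝ^d. Then for every τ > 0, E[ d^{-1} dist²(g, τ·∂‖·‖_{1,w}(x₀)) ] = σ + Σ_{i=1}^k ρ_i ( α_i (ω_i τ)² + (1 − α_i) φ(ω_i τ) ), where φ(t) = √(2/π) ∫_t^∞ (x−t)² exp(−x²/2) dx. -/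

import Mathlib

open MeasureTheory ProbabilityTheory
open scoped Pointwise BigOperators

noncomputable section

/-- `phi t = sqrt(2/pi) * int_t^infty (x-t)^2 exp(-x^2/2) dx`. -/
def phi (t : ℝ) : ℝ :=
  Real.sqrt (2 / Real.pi) * ∫ x in Set.Ioi t, (x - t) ^ 2 * Real.exp (-x ^ 2 / 2)

/-- The weighted ℓ1-norm `‖x‖_{1,w} = ∑ i, w i * |x i|`. -/
def wnorm {d : ℕ} (w : Fin d → ℝ) (x : EuclideanSpace ℝ (Fin d)) : ℝ :=
  ∑ j, w j * |x j|

/-- The subdifferential of a convex function `f` at `x₀`: the set of `p` with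
`f (x₀ + v) ≥ f x₀ + ⟨p, v⟩` for all `v`. -/
def subdiff {d : ℕ} (f : EuclideanSpace ℝ (Fin d) → ℝ) (x₀ : EuclideanSpace ℝ (Fin d)) :
    Set (EuclideanSpace ℝ (Fin d)) :=
  {p | ∀ v, f x₀ + @inner ℝ _ _ p v ≤ f (x₀ + v)}

/-- The standard Gaussian measure on `EuclideanSpace ℝ (Fin d)`:
independent standard Gaussian coordinates. -/
def stdGaussianE (d : ℕ) : Measure (EuclideanSpace ℝ (Fin d)) :=
  (Measure.pi fun _ : Fin d => gaussianReal 0 1).map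
    (MeasurableEquiv.toLp 2 (Fin d → ℝ))

/-! ### One-dimensional Gaussian computations -/

open Real

lemma neg_sq_half (x : ℝ) : -(1/2 : ℝ) * x ^ 2 = -x ^ 2 / 2 := by ring

lemma integrable_G : Integrable (fun x : ℝ => Real.exp (-x ^ 2 / 2)) := by
  have := integrable_exp_neg_mul_sq (by norm_num : (0:ℝ) < 1/2)
  simp only [neg_sq_half] at this; exact this

lemma integrable_xG : Integrable (fun x : ℝ => x * Real.exp (-x ^ 2 / 2)) := by
  have := integrable_mul_exp_neg_mul_sq (by norm_num : (0:ℝ) < 1/2)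
  simp only [neg_sq_half] at this; exact this

lemma x2G_le (x : ℝ) : x ^ 2 * Real.exp (-x ^ 2 / 2) ≤ 4 * Real.exp (-(1/4 : ℝ) * x ^ 2) := by
  have h2 : Real.exp (-x ^ 2 / 2) = Real.exp (-(x^2/4)) * Real.exp (-(1/4 : ℝ) * x ^ 2) := by
    rw [← Real.exp_add]; ring_nf
  rw [h2, ← mul_assoc]
  refine mul_le_mul_of_nonneg_right ?_ (Real.exp_pos _).le
  rw [Real.exp_neg, mul_comm (x^2), inv_mul_eq_div, div_le_iff₀ (Real.exp_pos _)]
  nlinarith [Real.add_one_le_exp (x^2/4)]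

lemma integrable_x2G : Integrable (fun x : ℝ => x ^ 2 * Real.exp (-x ^ 2 / 2)) := by
  have hb : Integrable (fun x : ℝ => 4 * Real.exp (-(1/4 : ℝ) * x ^ 2)) :=
    (integrable_exp_neg_mul_sq (by norm_num : (0:ℝ) < 1/4)).const_mul 4
  refine hb.mono' ?_ (Filter.Eventually.of_forall fun x => ?_)
  · exact ((measurable_id.pow_const 2).mul
      (((measurable_id.pow_const 2).neg.div_const 2).exp)).aestronglyMeasurable
  · have hnn : 0 ≤ x ^ 2 * Real.exp (-x ^ 2 / 2) := by positivity
    rw [Real.norm_of_nonneg hnn]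
    exact x2G_le x

lemma int_G : ∫ x : ℝ, Real.exp (-x ^ 2 / 2) = Real.sqrt (2 * π) := by
  have := integral_gaussian (1/2)
  simp only [neg_sq_half] at this
  rw [this]; norm_num; ring

lemma int_xG : ∫ x : ℝ, x * Real.exp (-x ^ 2 / 2) = 0 := by
  refine integral_eq_zero_of_hasDerivAt_of_integrable
    (f := fun x => -Real.exp (-x ^ 2 / 2)) (fun x => ?_) integrable_xG integrable_G.neg
  have h : HasDerivAt (fun x : ℝ => -x ^ 2 / 2) (-x) x := by
    have := ((hasDerivAt_pow 2 x).neg).div_const 2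
    exact this.congr_deriv (by rw [show (2:ℕ) - 1 = 1 from rfl]; push_cast; ring)
  exact (h.exp.neg.congr_deriv (by ring))

lemma int_x2G : ∫ x : ℝ, x ^ 2 * Real.exp (-x ^ 2 / 2) = Real.sqrt (2 * π) := by
  have key : ∫ x : ℝ, (x ^ 2 * Real.exp (-x ^ 2 / 2) - Real.exp (-x ^ 2 / 2)) = 0 := by
    refine integral_eq_zero_of_hasDerivAt_of_integrable
      (f := fun x => -(x * Real.exp (-x ^ 2 / 2))) (fun x => ?_)
      (integrable_x2G.sub integrable_G) integrable_xG.neg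
    have h : HasDerivAt (fun x : ℝ => -x ^ 2 / 2) (-x) x := by
      have := ((hasDerivAt_pow 2 x).neg).div_const 2
      exact this.congr_deriv (by rw [show (2:ℕ) - 1 = 1 from rfl]; push_cast; ring)
    have := ((hasDerivAt_id x).mul h.exp).neg
    refine this.congr_deriv ?_
    simp only [id]
    ring
  have := integral_sub integrable_x2G integrable_G
  rw [key] at this
  rw [int_G] at this
  linarith [this]

lemma pdf01 (x : ℝ) : gaussianPDFReal 0 1 x = (Real.sqrt (2 * π))⁻¹ * Real.exp (-x ^ 2 / 2) := by
  simp [gaussianPDFReal]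

lemma integral_gaussianReal_eq (f : ℝ → ℝ) :
    ∫ x, f x ∂(gaussianReal 0 1) = ∫ x, gaussianPDFReal 0 1 x * f x := by
  rw [gaussianReal_of_var_ne_zero 0 one_ne_zero]
  have h : gaussianPDF 0 1 = fun x => ((gaussianPDFReal 0 1 x).toNNReal : ENNReal) := by
    funext x; rw [gaussianPDF]; rfl
  rw [h, integral_withDensity_eq_integral_smul (by
    exact (measurable_gaussianPDFReal 0 1).real_toNNReal) f]
  congr 1; funext x
  rw [NNReal.smul_def, smul_eq_mul, Real.coe_toNNReal _ (gaussianPDFReal_nonneg 0 1 x)]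

lemma integrable_quad_bound {f : ℝ → ℝ} (hf : Measurable f) (C : ℝ)
    (hb : ∀ x, |f x| ≤ C * (1 + x ^ 2)) : Integrable f (gaussianReal 0 1) := by
  rw [gaussianReal_of_var_ne_zero 0 one_ne_zero]
  rw [integrable_withDensity_iff (measurable_gaussianPDF 0 1)
    (Filter.Eventually.of_forall fun x => ENNReal.ofReal_lt_top)]
  have htoReal : ∀ x, (gaussianPDF 0 1 x).toReal = gaussianPDFReal 0 1 x := fun x =>
    ENNReal.toReal_ofReal (gaussianPDFReal_nonneg 0 1 x)
  have hbnd : Integrable (fun x : ℝ =>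
      C * (Real.sqrt (2 * π))⁻¹ * ((1 + x ^ 2) * Real.exp (-x ^ 2 / 2))) := by
    exact (Integrable.const_mul (by
      simpa [add_mul, Pi.add_def] using
        ((by exact integrable_G : Integrable fun x : ℝ => Real.exp (-x^2/2)).add
          (by exact integrable_x2G))) _)
  refine hbnd.mono' ((hf.mul (measurable_gaussianPDF 0 1).ennreal_toReal).aestronglyMeasurable)
    (Filter.Eventually.of_forall fun x => ?_)
  rw [Real.norm_eq_abs, abs_mul, htoReal, pdf01]
  have h1 : |f x| * |(Real.sqrt (2 * π))⁻¹ * Real.exp (-x ^ 2 / 2)|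
      ≤ (C * (1 + x ^ 2)) * ((Real.sqrt (2 * π))⁻¹ * Real.exp (-x ^ 2 / 2)) := by
    rw [abs_of_nonneg (by positivity : (0:ℝ) ≤ (Real.sqrt (2 * π))⁻¹ * Real.exp (-x ^ 2 / 2))]
    exact mul_le_mul_of_nonneg_right (hb x) (by positivity)
  calc |f x| * |(Real.sqrt (2 * π))⁻¹ * Real.exp (-x ^ 2 / 2)|
      ≤ (C * (1 + x ^ 2)) * ((Real.sqrt (2 * π))⁻¹ * Real.exp (-x ^ 2 / 2)) := h1
    _ = C * (Real.sqrt (2 * π))⁻¹ * ((1 + x ^ 2) * Real.exp (-x ^ 2 / 2)) := by ring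

lemma gauss_moment_sq (a : ℝ) : ∫ x, (x - a) ^ 2 ∂(gaussianReal 0 1) = 1 + a ^ 2 := by
  rw [integral_gaussianReal_eq]
  have hrw : ∀ x : ℝ, gaussianPDFReal 0 1 x * (x - a) ^ 2
      = (Real.sqrt (2 * π))⁻¹ *
        (x ^ 2 * Real.exp (-x ^ 2 / 2) - (2 * a) * (x * Real.exp (-x ^ 2 / 2))
          + a ^ 2 * Real.exp (-x ^ 2 / 2)) := by
    intro x; rw [pdf01]; ring
  simp only [hrw]
  have i2 : Integrable (fun x : ℝ => (2 * a) * (x * Real.exp (-x ^ 2 / 2))) :=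
    integrable_xG.const_mul _
  have i1 : Integrable (fun x : ℝ =>
      x ^ 2 * Real.exp (-x ^ 2 / 2) - (2 * a) * (x * Real.exp (-x ^ 2 / 2))) := by
    exact integrable_x2G.sub i2
  have i3 : Integrable (fun x : ℝ => a ^ 2 * Real.exp (-x ^ 2 / 2)) := integrable_G.const_mul _
  rw [integral_const_mul, integral_add i1 i3, integral_sub integrable_x2G i2,
    integral_const_mul, integral_const_mul, int_G, int_xG, int_x2G]
  have h := Real.sqrt_pos.mpr (by positivity : (0:ℝ) < 2 * π)
  field_simp
  ring

lemma integrable_posG (t : ℝ) :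
    Integrable (fun x : ℝ => max (x - t) 0 ^ 2 * Real.exp (-x ^ 2 / 2)) := by
  have hb : Integrable (fun x : ℝ =>
      (2 * (x ^ 2 * Real.exp (-x^2/2)) + (2 * t ^ 2) * Real.exp (-x^2/2))) :=
    (integrable_x2G.const_mul 2).add (integrable_G.const_mul _)
  refine hb.mono' ?_ (Filter.Eventually.of_forall fun x => ?_)
  · exact (((measurable_id.sub_const t).max measurable_const).pow_const 2).mul
      (((measurable_id.pow_const 2).neg.div_const 2).exp) |>.aestronglyMeasurable
  · have h0 : (0:ℝ) ≤ max (x - t) 0 ^ 2 * Real.exp (-x ^ 2 / 2) := by positivity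
    rw [Real.norm_of_nonneg h0]
    have hm : max (x - t) 0 ^ 2 ≤ 2 * x ^ 2 + 2 * t ^ 2 := by
      rcases le_or_gt (x - t) 0 with h | h
      · rw [max_eq_right h]; norm_num; positivity
      · rw [max_eq_left h.le]; nlinarith [sq_nonneg (x + t)]
    calc max (x - t) 0 ^ 2 * Real.exp (-x ^ 2 / 2)
        ≤ (2 * x ^ 2 + 2 * t ^ 2) * Real.exp (-x ^ 2 / 2) :=
          mul_le_mul_of_nonneg_right hm (Real.exp_pos _).le
      _ = 2 * (x ^ 2 * Real.exp (-x^2/2)) + (2 * t ^ 2) * Real.exp (-x^2/2) := by ring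

lemma two_inv_sqrt : (Real.sqrt (2 * π))⁻¹ * 2 = Real.sqrt (2 / π) := by
  have hπ := Real.pi_pos
  have h2π : (0:ℝ) < 2 * π := by positivity
  have hs : (0:ℝ) < Real.sqrt (2 * π) := Real.sqrt_pos.mpr h2π
  rw [show (2:ℝ) / π = ((Real.sqrt (2 * π))⁻¹ * 2) ^ 2 from ?_, Real.sqrt_sq (by positivity)]
  rw [mul_pow, inv_pow, Real.sq_sqrt h2π.le]
  field_simp

lemma gauss_pospart (t : ℝ) (ht : 0 ≤ t) :
    ∫ x, max (|x| - t) 0 ^ 2 ∂(gaussianReal 0 1) = phi t := by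
  rw [integral_gaussianReal_eq]
  have hrw : ∀ x : ℝ, gaussianPDFReal 0 1 x * max (|x| - t) 0 ^ 2
      = (Real.sqrt (2 * π))⁻¹ * (max (|x| - t) 0 ^ 2 * Real.exp (-|x| ^ 2 / 2)) := by
    intro x; rw [pdf01, sq_abs]; ring
  simp only [hrw]
  rw [integral_const_mul]
  rw [show (fun x : ℝ => max (|x| - t) 0 ^ 2 * Real.exp (-|x| ^ 2 / 2))
      = fun x : ℝ => (fun y : ℝ => max (y - t) 0 ^ 2 * Real.exp (-y ^ 2 / 2)) |x| from rfl]
  rw [integral_comp_abs (f := fun y : ℝ => max (y - t) 0 ^ 2 * Real.exp (-y ^ 2 / 2))]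
  have hsplit : Set.Ioi (0:ℝ) = Set.Ioc 0 t ∪ Set.Ioi t := (Set.Ioc_union_Ioi_eq_Ioi ht).symm
  rw [hsplit, setIntegral_union (Set.Ioc_disjoint_Ioi le_rfl) measurableSet_Ioi
    ((integrable_posG t).integrableOn) ((integrable_posG t).integrableOn)]
  have h1 : ∫ x in Set.Ioc (0:ℝ) t, max (x - t) 0 ^ 2 * Real.exp (-x ^ 2 / 2) = 0 := by
    rw [setIntegral_congr_fun measurableSet_Ioc
      (fun x hx => by
        have : x - t ≤ 0 := by simp at hx; linarith [hx.2]
        simp [max_eq_right this] : Set.EqOn _ (fun _ => (0:ℝ)) _)]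
    simp
  have h2 : ∫ x in Set.Ioi t, max (x - t) 0 ^ 2 * Real.exp (-x ^ 2 / 2)
      = ∫ x in Set.Ioi t, (x - t) ^ 2 * Real.exp (-x ^ 2 / 2) := by
    refine setIntegral_congr_fun measurableSet_Ioi (fun x hx => ?_)
    have : 0 ≤ x - t := by simp at hx; linarith
    simp [max_eq_left this]
  rw [h1, h2, zero_add, phi, ← two_inv_sqrt]
  ring


/-! ### Marginals of the product Gaussian -/

lemma measurePreserving_eval_pi {d : ℕ} (j : Fin d) :
    MeasurePreserving (Function.eval j) (Measure.pi fun _ : Fin d => gaussianReal 0 1)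
      (gaussianReal 0 1) := by
  refine ⟨measurable_pi_apply j, ?_⟩
  refine Measure.ext fun s hs => ?_
  rw [Measure.map_apply (measurable_pi_apply j) hs]
  rw [show Function.eval j ⁻¹' s
      = Set.univ.pi (Function.update (fun _ : Fin d => (Set.univ : Set ℝ)) j s) from
    Set.eval_preimage]
  rw [Measure.pi_pi]
  rw [Finset.prod_eq_single j (fun i _ hij => by simp [Function.update_of_ne hij]) (by simp)]
  simp

lemma integral_eval_pi {d : ℕ} (j : Fin d) (f : ℝ → ℝ)
    (hf : AEStronglyMeasurable f (gaussianReal 0 1)) :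
    ∫ x, f (x j) ∂(Measure.pi fun _ : Fin d => gaussianReal 0 1)
      = ∫ t, f t ∂(gaussianReal 0 1) := by
  have hmp := measurePreserving_eval_pi (j := j)
  have h := integral_map (μ := Measure.pi fun _ : Fin d => gaussianReal 0 1)
    (measurable_pi_apply j).aemeasurable (f := f) (by rwa [hmp.map_eq])
  rw [hmp.map_eq] at h
  exact h.symm

/-! ### The subdifferential set and distances to it -/

/-- The set of `p` with `p j = a j` on `T` and `|p j| ≤ b j` off `T`. -/
def Kset {d : ℕ} (T : Finset (Fin d)) (a b : Fin d → ℝ) : Set (EuclideanSpace ℝ (Fin d)) :=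
  {p | ∀ j, (j ∈ T → p j = a j) ∧ (j ∉ T → |p j| ≤ b j)}

lemma subdiff_eq {d : ℕ} (w : Fin d → ℝ) (hw : ∀ j, 0 < w j)
    (x₀ : EuclideanSpace ℝ (Fin d)) (T : Finset (Fin d)) (hT : ∀ j, j ∈ T ↔ x₀ j ≠ 0) :
    subdiff (wnorm w) x₀ = Kset T (fun j => if 0 < x₀ j then w j else -w j) w := by
  ext p
  constructor
  · intro hp j
    have key : ∀ t : ℝ, w j * |x₀ j| + p j * t ≤ w j * |x₀ j + t| := by
      intro t
      have h := hp (EuclideanSpace.single j t)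
      have hinner : (inner ℝ p (EuclideanSpace.single j t) : ℝ) = p j * t := by
        rw [PiLp.inner_apply]
        rw [Finset.sum_eq_single j
          (fun i _ hij => by
            simp [RCLike.inner_apply, EuclideanSpace.single_apply, hij]) (by simp)]
        simp [RCLike.inner_apply, starRingEnd_apply, EuclideanSpace.single_apply]; ring
      have hsum : wnorm w (x₀ + EuclideanSpace.single j t)
          = wnorm w x₀ + (w j * |x₀ j + t| - w j * |x₀ j|) := by
        have hterm : ∀ i, w i * |(x₀ + EuclideanSpace.single j t) i|
            = w i * |x₀ i| + (if i = j then w j * |x₀ j + t| - w j * |x₀ j| else 0) := by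
          intro i
          by_cases hij : i = j
          · subst hij
            simp [PiLp.add_apply, EuclideanSpace.single_apply]
          · simp [PiLp.add_apply, EuclideanSpace.single_apply, hij]
        rw [wnorm, wnorm]
        simp only [hterm]
        rw [Finset.sum_add_distrib, Finset.sum_ite_eq' Finset.univ j
          (fun _ => w j * |x₀ j + t| - w j * |x₀ j|)]
        simp
      rw [hinner, hsum] at h
      linarith [h]
    constructor
    · intro hjT
      have hx0 : x₀ j ≠ 0 := (hT j).mp hjT
      rcases lt_or_gt_of_ne hx0 with hneg | hpos
      · -- x₀ j < 0
        show p j = if 0 < x₀ j then w j else -w j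
        rw [if_neg (not_lt.mpr hneg.le)]
        have k1 := key (-(x₀ j))
        have k2 := key (x₀ j)
        rw [abs_of_neg hneg] at k1 k2
        simp only [add_neg_cancel, abs_zero, mul_zero] at k1
        have h2 : |x₀ j + x₀ j| = -(x₀ j + x₀ j) := abs_of_neg (by linarith)
        rw [h2] at k2
        nlinarith [hw j, k1, k2]
      · show p j = if 0 < x₀ j then w j else -w j
        rw [if_pos hpos]
        have k1 := key (x₀ j)
        have k2 := key (-(x₀ j))
        rw [abs_of_pos hpos] at k1 k2
        have h1 : |x₀ j + x₀ j| = x₀ j + x₀ j := abs_of_pos (by linarith)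
        rw [h1] at k1
        simp only [add_neg_cancel, abs_zero, mul_zero] at k2
        nlinarith [hw j, k1, k2]
    · intro hjT
      have hx0 : x₀ j = 0 := by
        by_contra h; exact hjT ((hT j).mpr h)
      have k1 := key 1
      have k2 := key (-1)
      rw [hx0] at k1 k2
      simp at k1 k2
      exact abs_le.mpr ⟨by linarith, by linarith⟩
  · intro hp v
    have hinner : (inner ℝ p v : ℝ) = ∑ j, p j * v j := by
      rw [PiLp.inner_apply]
      refine Finset.sum_congr rfl fun i _ => ?_
      simp [RCLike.inner_apply, starRingEnd_apply]; ring
    rw [hinner, wnorm, wnorm, ← Finset.sum_add_distrib]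
    refine Finset.sum_le_sum fun j _ => ?_
    have hadd : (x₀ + v) j = x₀ j + v j := rfl
    rw [hadd]
    by_cases hjT : j ∈ T
    · have hpj := (hp j).1 hjT
      have hpj' : p j = if 0 < x₀ j then w j else -w j := hpj
      rcases lt_or_ge 0 (x₀ j) with hpos | hle
      · rw [hpj', if_pos hpos, abs_of_pos hpos]
        calc w j * x₀ j + w j * v j = w j * (x₀ j + v j) := by ring
          _ ≤ w j * |x₀ j + v j| := mul_le_mul_of_nonneg_left (le_abs_self _) (hw j).le
      · have hx0 : x₀ j ≠ 0 := (hT j).mp hjT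
        have hneg : x₀ j < 0 := lt_of_le_of_ne hle hx0
        rw [hpj', if_neg (not_lt.mpr hle), abs_of_neg hneg]
        calc w j * -x₀ j + -w j * v j = w j * -(x₀ j + v j) := by ring
          _ ≤ w j * |x₀ j + v j| := mul_le_mul_of_nonneg_left (neg_le_abs _) (hw j).le
    · have hx0 : x₀ j = 0 := by
        by_contra h; exact hjT ((hT j).mpr h)
      have hpj := (hp j).2 hjT
      rw [hx0]
      simp only [abs_zero, mul_zero, zero_add]
      calc p j * v j ≤ |p j * v j| := le_abs_self _
        _ = |p j| * |v j| := abs_mul _ _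
        _ ≤ w j * |v j| := mul_le_mul_of_nonneg_right hpj (abs_nonneg _)

lemma smul_Kset {d : ℕ} (τ : ℝ) (hτ : 0 < τ) (T : Finset (Fin d)) (a b : Fin d → ℝ) :
    τ • Kset T a b = Kset T (fun j => τ * a j) (fun j => τ * b j) := by
  ext p
  rw [Set.mem_smul_set_iff_inv_smul_mem₀ hτ.ne']
  constructor
  · intro hp j
    have h1 := (hp j).1
    have h2 := (hp j).2
    have happ : (τ⁻¹ • p) j = τ⁻¹ * p j := rfl
    constructor
    · intro hj
      have h := h1 hj
      rw [happ] at h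
      show p j = τ * a j
      field_simp at h
      linarith [h]
    · intro hj
      have h := h2 hj
      rw [happ, abs_mul, abs_inv, abs_of_pos hτ] at h
      show |p j| ≤ τ * b j
      calc |p j| = τ * (τ⁻¹ * |p j|) := by field_simp
        _ ≤ τ * b j := mul_le_mul_of_nonneg_left h hτ.le
  · intro hp j
    have happ : (τ⁻¹ • p) j = τ⁻¹ * p j := rfl
    constructor
    · intro hj
      have h : p j = τ * a j := (hp j).1 hj
      rw [happ, h]
      field_simp
    · intro hj
      have h : |p j| ≤ τ * b j := (hp j).2 hj
      rw [happ, abs_mul, abs_inv, abs_of_pos hτ]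
      rw [inv_mul_le_iff₀ hτ]
      linarith [h]

lemma infDist_Kset {d : ℕ} (T : Finset (Fin d)) (a b : Fin d → ℝ) (hb : ∀ j, 0 ≤ b j)
    (g : EuclideanSpace ℝ (Fin d)) :
    Metric.infDist g (Kset T a b) ^ 2
      = ∑ j, (if j ∈ T then (g j - a j) ^ 2 else max (|g j| - b j) 0 ^ 2) := by
  classical
  set q : Fin d → ℝ := fun j => if j ∈ T then (g j - a j) ^ 2 else max (|g j| - b j) 0 ^ 2
    with hq
  have hqnonneg : ∀ j, 0 ≤ q j := by
    intro j; rw [hq]; dsimp only; split <;> positivity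
  have hqsum : 0 ≤ ∑ j, q j := Finset.sum_nonneg fun j _ => hqnonneg j
  set proj : EuclideanSpace ℝ (Fin d) :=
    WithLp.toLp 2 (fun j => if j ∈ T then a j else max (-(b j)) (min (b j) (g j))) with hproj
  have hproj_mem : proj ∈ Kset T a b := by
    intro j
    constructor
    · intro hj; rw [hproj]; simp [hj]
    · intro hj
      rw [hproj]
      simp only [PiLp.toLp_apply, if_neg hj]
      refine abs_le.mpr ⟨le_max_left _ _, max_le (by linarith [hb j]) ?_⟩
      exact min_le_left _ _
  have hproj_dist : ∀ j, (g j - proj j) ^ 2 = q j := by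
    intro j
    rw [hproj, hq]
    by_cases hj : j ∈ T
    · simp [hj]
    · simp only [PiLp.toLp_apply, if_neg hj]
      rcases le_or_gt (g j) (b j) with h1 | h1
      · rcases le_or_gt (-(b j)) (g j) with h2 | h2
        · rw [min_eq_right h1, max_eq_right h2]
          have habs : |g j| ≤ b j := abs_le.mpr ⟨h2, h1⟩
          rw [max_eq_right (by linarith)]
          ring
        · rw [min_eq_right h1, max_eq_left h2.le]
          have habs : |g j| = -(g j) := abs_of_neg (by linarith [hb j])
          rw [habs, max_eq_left (by linarith)]
          ring
      · rw [min_eq_left h1.le, max_eq_right (by linarith [hb j])]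
        have habs : |g j| = g j := abs_of_pos (by linarith [hb j])
        rw [habs, max_eq_left (by linarith)]
  have hdist_eq : ∀ p : EuclideanSpace ℝ (Fin d), dist g p = Real.sqrt (∑ j, (g j - p j) ^ 2) := by
    intro p
    rw [EuclideanSpace.dist_eq]
    congr 1
    exact Finset.sum_congr rfl fun j _ => by rw [Real.dist_eq, sq_abs]
  have hlower : ∀ p ∈ Kset T a b, Real.sqrt (∑ j, q j) ≤ dist g p := by
    intro p hp
    rw [hdist_eq]
    refine Real.sqrt_le_sqrt (Finset.sum_le_sum fun j _ => ?_)
    rw [hq]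
    dsimp only
    by_cases hj : j ∈ T
    · rw [if_pos hj, (hp j).1 hj]
    · rw [if_neg hj]
      have h1 : max (|g j| - b j) 0 ≤ |g j - p j| := by
        refine max_le ?_ (abs_nonneg _)
        calc |g j| - b j ≤ |g j| - |p j| := by linarith [(hp j).2 hj]
          _ ≤ |g j - p j| := abs_sub_abs_le_abs_sub _ _
      calc max (|g j| - b j) 0 ^ 2 ≤ |g j - p j| ^ 2 := by
            refine pow_le_pow_left₀ (le_max_right _ _) h1 2
        _ = (g j - p j) ^ 2 := sq_abs _
  have hupper : Metric.infDist g (Kset T a b) ≤ Real.sqrt (∑ j, q j) := by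
    refine le_trans (Metric.infDist_le_dist_of_mem hproj_mem) ?_
    rw [hdist_eq]
    refine le_of_eq ?_
    congr 1
    exact Finset.sum_congr rfl fun j _ => hproj_dist j
  have hne : (Kset T a b).Nonempty := ⟨proj, hproj_mem⟩
  have hlow : Real.sqrt (∑ j, q j) ≤ Metric.infDist g (Kset T a b) := by
    by_contra hcon
    push_neg at hcon
    obtain ⟨p, hpmem, hplt⟩ := (Metric.infDist_lt_iff hne).mp hcon
    exact absurd hplt (not_lt.mpr (hlower p hpmem))
  have : Metric.infDist g (Kset T a b) = Real.sqrt (∑ j, q j) := le_antisymm hupper hlow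
  rw [this, Real.sq_sqrt hqsum]
theorem expected_sq_dist_to_dilated_subdifferential {d k : ℕ} (hd : 0 < d)
    (S : Fin k → Finset (Fin d))
    (hdisj : ∀ i₁ i₂, i₁ ≠ i₂ → Disjoint (S i₁) (S i₂))
    (hcover : ∀ j, ∃ i, j ∈ S i)
    (x₀ : EuclideanSpace ℝ (Fin d)) (hx₀ : x₀ ≠ 0)
    (T : Finset (Fin d)) (hT : T = Finset.univ.filter fun j => x₀ j ≠ 0)
    (ω : Fin k → ℝ) (hω : ∀ i, 0 < ω i)
    (w : Fin d → ℝ) (hwdef : ∀ j, w j = ∑ i, if j ∈ S i then ω i else 0)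
    (τ : ℝ) (hτ : 0 < τ) :
    ∫ g, (d : ℝ)⁻¹ * Metric.infDist g (τ • subdiff (wnorm w) x₀) ^ 2 ∂(stdGaussianE d)
      = (T.card : ℝ) / d
        + ∑ i, ((S i).card : ℝ) / d *
            (((T ∩ S i).card : ℝ) / (S i).card * (ω i * τ) ^ 2
              + (1 - ((T ∩ S i).card : ℝ) / (S i).card) * phi (ω i * τ)) := by
  classical
  have hd0 : (d : ℝ) ≠ 0 := Nat.cast_ne_zero.mpr hd.ne'
  have hwpos : ∀ j, 0 < w j := by
    intro j
    obtain ⟨i, hi⟩ := hcover j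
    rw [hwdef j]
    refine Finset.sum_pos' (fun i' _ => ?_) ⟨i, Finset.mem_univ i, ?_⟩
    · split
      · exact (hω i').le
      · exact le_rfl
    · rw [if_pos hi]; exact hω i
  have hwS : ∀ i j, j ∈ S i → w j = ω i := by
    intro i j hj
    rw [hwdef j, Finset.sum_eq_single i
      (fun i' _ hne => if_neg fun h => (Finset.disjoint_left.mp (hdisj i' i hne) h) hj)
      (fun h => absurd (Finset.mem_univ i) h), if_pos hj]
  have hTmem : ∀ j, j ∈ T ↔ x₀ j ≠ 0 := by intro j; rw [hT]; simp
  set a : Fin d → ℝ := fun j => if 0 < x₀ j then w j else -w j with ha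
  have hKey : τ • subdiff (wnorm w) x₀ = Kset T (fun j => τ * a j) (fun j => τ * w j) := by
    rw [subdiff_eq w hwpos x₀ T hTmem, smul_Kset τ hτ]
  set q : Fin d → ℝ → ℝ :=
    fun j x => if j ∈ T then (x - τ * a j) ^ 2 else max (|x| - τ * w j) 0 ^ 2 with hqdef
  have hdist : ∀ g : EuclideanSpace ℝ (Fin d),
      Metric.infDist g (τ • subdiff (wnorm w) x₀) ^ 2 = ∑ j, q j (g j) := by
    intro g
    rw [hKey, infDist_Kset T _ _ (fun j => mul_nonneg hτ.le (hwpos j).le)]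
  have hqmeas : ∀ j, Measurable (q j) := by
    intro j
    rw [hqdef]
    dsimp only
    by_cases hj : j ∈ T
    · simp only [if_pos hj]
      exact (measurable_id.sub_const _).pow_const 2
    · simp only [if_neg hj]
      exact ((measurable_id.abs.sub_const _).max measurable_const).pow_const 2
  have hqint : ∀ j, Integrable (q j) (gaussianReal 0 1) := by
    intro j
    refine integrable_quad_bound (hqmeas j) (2 + 2 * (τ * a j) ^ 2) fun x => ?_
    rw [hqdef]
    dsimp only
    by_cases hj : j ∈ T
    · rw [if_pos hj, abs_of_nonneg (sq_nonneg _)]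
      nlinarith [sq_nonneg (x + τ * a j), sq_nonneg x, sq_nonneg (τ * a j),
        sq_nonneg (x * (τ * a j))]
    · rw [if_neg hj, abs_of_nonneg (sq_nonneg _)]
      have h1 : max (|x| - τ * w j) 0 ≤ |x| := by
        refine max_le ?_ (abs_nonneg _)
        have : 0 ≤ τ * w j := mul_nonneg hτ.le (hwpos j).le
        linarith
      have h2 : max (|x| - τ * w j) 0 ^ 2 ≤ |x| ^ 2 :=
        pow_le_pow_left₀ (le_max_right _ _) h1 2
      rw [sq_abs] at h2
      nlinarith [sq_nonneg x, sq_nonneg (τ * a j), sq_nonneg (x * (τ * a j))]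
  have hqval : ∀ j, ∫ t, q j t ∂(gaussianReal 0 1)
      = if j ∈ T then 1 + (w j * τ) ^ 2 else phi (w j * τ) := by
    intro j
    by_cases hj : j ∈ T
    · rw [if_pos hj]
      have : (fun t : ℝ => q j t) = fun t : ℝ => (t - τ * a j) ^ 2 := by
        funext t; rw [hqdef]; dsimp only; rw [if_pos hj]
      rw [this, gauss_moment_sq]
      congr 1
      have : a j = if 0 < x₀ j then w j else -w j := rfl
      rw [this]
      split <;> ring
    · rw [if_neg hj]
      have : (fun t : ℝ => q j t) = fun t : ℝ => max (|t| - τ * w j) 0 ^ 2 := by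
        funext t; rw [hqdef]; dsimp only; rw [if_neg hj]
      rw [this, gauss_pospart (τ * w j) (mul_nonneg hτ.le (hwpos j).le), mul_comm]
  have hqint_pi : ∀ j, Integrable (fun x : Fin d → ℝ => q j (x j))
      (Measure.pi fun _ : Fin d => gaussianReal 0 1) := by
    intro j
    exact ((measurePreserving_eval_pi j).integrable_comp
      (hqmeas j).aestronglyMeasurable).mpr (hqint j)
  have hTn : ∑ i, (S i ∩ T).card = T.card := by
    rw [← Finset.card_biUnion
      (fun i _ i' _ hne => Finset.disjoint_of_subset_left Finset.inter_subset_left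
        (Finset.disjoint_of_subset_right Finset.inter_subset_left (hdisj i i' hne)))]
    congr 1
    ext j
    simp only [Finset.mem_biUnion, Finset.mem_univ, true_and, Finset.mem_inter]
    constructor
    · rintro ⟨i, _, hjT⟩; exact hjT
    · intro hjT; obtain ⟨i, hi⟩ := hcover j; exact ⟨i, hi, hjT⟩
  have hinner_sum : ∀ i, (∑ j ∈ S i, if j ∈ T then 1 + (w j * τ) ^ 2 else phi (w j * τ))
      = ((S i ∩ T).card : ℝ) * (1 + (ω i * τ) ^ 2)
        + (((S i).card : ℝ) - ((S i ∩ T).card : ℝ)) * phi (ω i * τ) := by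
    intro i
    have hsd : (((S i) \ T).card : ℝ) = ((S i).card : ℝ) - ((S i ∩ T).card : ℝ) := by
      have h := Finset.card_inter_add_card_sdiff (S i) T
      have h' : ((S i ∩ T).card : ℝ) + (((S i) \ T).card : ℝ) = ((S i).card : ℝ) := by
        exact_mod_cast congrArg (Nat.cast : ℕ → ℝ) h
      linarith
    rw [Finset.sum_congr rfl (fun j hj => by rw [hwS i j hj] :
      ∀ j ∈ S i, (if j ∈ T then 1 + (w j * τ) ^ 2 else phi (w j * τ))
        = (if j ∈ T then 1 + (ω i * τ) ^ 2 else phi (ω i * τ)))]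
    rw [Finset.sum_ite, Finset.sum_const, Finset.sum_const, Finset.filter_mem_eq_inter,
      ← Finset.sdiff_eq_filter, nsmul_eq_mul, nsmul_eq_mul, hsd]
  calc ∫ g, (d : ℝ)⁻¹ * Metric.infDist g (τ • subdiff (wnorm w) x₀) ^ 2 ∂(stdGaussianE d)
      = ∫ x, (d : ℝ)⁻¹ * ∑ j, q j (x j)
          ∂(Measure.pi fun _ : Fin d => gaussianReal 0 1) := by
        rw [stdGaussianE, integral_map_equiv]
        refine integral_congr_ae (Filter.Eventually.of_forall fun x => ?_)
        show (d : ℝ)⁻¹ * Metric.infDist ((MeasurableEquiv.toLp 2 (Fin d → ℝ)) x)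
            (τ • subdiff (wnorm w) x₀) ^ 2 = (d : ℝ)⁻¹ * ∑ j, q j (x j)
        rw [hdist ((MeasurableEquiv.toLp 2 (Fin d → ℝ)) x)]
        rfl
    _ = (d : ℝ)⁻¹ * ∑ j, ∫ t, q j t ∂(gaussianReal 0 1) := by
        rw [integral_const_mul, integral_finset_sum _ (fun j _ => hqint_pi j)]
        congr 1
        exact Finset.sum_congr rfl fun j _ =>
          integral_eval_pi j (q j) (hqmeas j).aestronglyMeasurable
    _ = (d : ℝ)⁻¹ * ∑ j, (if j ∈ T then 1 + (w j * τ) ^ 2 else phi (w j * τ)) := by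
        rw [Finset.sum_congr rfl fun j _ => hqval j]
    _ = (d : ℝ)⁻¹ * ∑ i, (∑ j ∈ S i, if j ∈ T then 1 + (w j * τ) ^ 2 else phi (w j * τ)) := by
        congr 1
        rw [show (Finset.univ : Finset (Fin d)) = Finset.univ.biUnion S from ?_,
          Finset.sum_biUnion (fun i _ i' _ hne => hdisj i i' hne)]
        ext j
        simp only [Finset.mem_biUnion, Finset.mem_univ, true_and]
        exact iff_of_true trivial (hcover j)
    _ = (T.card : ℝ) / d
        + ∑ i, ((S i).card : ℝ) / d *
            (((T ∩ S i).card : ℝ) / (S i).card * (ω i * τ) ^ 2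
              + (1 - ((T ∩ S i).card : ℝ) / (S i).card) * phi (ω i * τ)) := by
        rw [Finset.sum_congr rfl fun i _ => hinner_sum i, Finset.mul_sum]
        have hper : ∀ i, (d : ℝ)⁻¹ * (((S i ∩ T).card : ℝ) * (1 + (ω i * τ) ^ 2)
              + (((S i).card : ℝ) - ((S i ∩ T).card : ℝ)) * phi (ω i * τ))
            = ((S i ∩ T).card : ℝ) / d
              + ((S i).card : ℝ) / d *
                (((T ∩ S i).card : ℝ) / (S i).card * (ω i * τ) ^ 2
                  + (1 - ((T ∩ S i).card : ℝ) / (S i).card) * phi (ω i * τ)) := by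
          intro i
          rw [show T ∩ S i = S i ∩ T from Finset.inter_comm _ _]
          by_cases hSi : ((S i).card : ℝ) = 0
          · have hSe : S i = ∅ := Finset.card_eq_zero.mp (Nat.cast_injective (hSi.trans
              (by norm_num)))
            simp [hSe]
          · field_simp
            ring
        rw [Finset.sum_congr rfl fun i _ => hper i, Finset.sum_add_distrib]
        congr 1
        rw [← Finset.sum_div]
        congr 1
        exact_mod_cast congrArg (Nat.cast : ℕ → ℝ) hTn
end
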